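/- Let there be N players with strategy sets X_i ⊆ ℝ^{m_i}, continuously differentiable objective functions J_i : ℝ^m → ℝ, and parameterized conjecture maps γ_i^j(·;θ_{i,j}) : X_i → ℝ^{m_j}, θ_{i,j} ∈ Θ_{i,j}, each differentiable in x_i. Assume the conjecture class is expressive: for all i ≠ j, all x_i ∈ X_i, all x_j ∈ X_j, and every matrix α ∈ ℝ^{m_j × m_i}, there exists θ_{i,j} ∈ Θ_{i,j} with γ_i^j(x_i; θ_{i,j}) = x_j and ∇_{x_i} γ_i^j(x_i; θ_{i,j}) = α. Assume further there is a point x̂ ∈ ∏_i X_i such that for every player i the partial gradient ∇_{x_{-i}} J_i(x̂) is nonzero. Then the feasible set is nonempty: there exists θ = (θ_{i,j})_{i≠j} such that for every i, γ_i^j(x̂_i; θ_{i,j}) = x̂_j for all j ≠ i, and the total derivative of x_i ↦ J_i(x_i, γ_i^{-i}(x_i;θ_i)) vanishes at x̂_i, i.e., ∇_{x_i} J_i(x̂) + (∇_{x_i} γ_i^{-i}(x̂_i;θ_i))ᵀ ∇_{x_{-i}} J_i(x̂) = 0. -/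

import Mathlib

/-- The profile conjectured by player `i` when it plays `y`: coordinate `i` is `y` itself
and coordinate `j ≠ i` is the conjectured strategy `γ i j y (θ i j)` of player `j`. -/
noncomputable def conjProfile {N d : ℕ} {m : Fin N → ℕ}
    (γ : (i j : Fin N) → EuclideanSpace ℝ (Fin (m i)) → EuclideanSpace ℝ (Fin d) →
      EuclideanSpace ℝ (Fin (m j)))
    (θ : (i j : Fin N) → EuclideanSpace ℝ (Fin d)) (i : Fin N)
    (y : EuclideanSpace ℝ (Fin (m i))) : (k : Fin N) → EuclideanSpace ℝ (Fin (m k)) :=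
  Function.update
    (fun j : Fin N =>
      if _h : j = i then (0 : EuclideanSpace ℝ (Fin (m j)))
      else γ i j y (θ i j)) i y

/-- Proposition 2 of the paper: if the conjecture class is expressive
(any target value and any target Jacobian can be matched at any point of the strategy
sets) and there is a point `xhat` where every player's partial gradient with respect to
the opponents' variables is nonzero, then the feasible set of the conjecture design
problem is nonempty: there are parameters `θ` that are first-order consistent at `xhat`
and make each conjectured objective stationary at `xhat_i`. -/
theorem feasible_set_nonempty (N d : ℕ) (m : Fin N → ℕ)
    (X : ∀ i : Fin N, Set (EuclideanSpace ℝ (Fin (m i))))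
    (Θ : Fin N → Fin N → Set (EuclideanSpace ℝ (Fin d)))
    (J : Fin N → ((k : Fin N) → EuclideanSpace ℝ (Fin (m k))) → ℝ)
    (hJ : ∀ i, ContDiff ℝ 1 (J i))
    (γ : (i j : Fin N) → EuclideanSpace ℝ (Fin (m i)) → EuclideanSpace ℝ (Fin d) →
      EuclideanSpace ℝ (Fin (m j)))
    (hγdiff : ∀ i j : Fin N, i ≠ j → ∀ θij : EuclideanSpace ℝ (Fin d),
      Differentiable ℝ (fun y => γ i j y θij))
    -- expressivity of the conjecture class
    (hexpr : ∀ i j : Fin N, i ≠ j → ∀ xi ∈ X i, ∀ xj ∈ X j,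
      ∀ α : EuclideanSpace ℝ (Fin (m i)) →L[ℝ] EuclideanSpace ℝ (Fin (m j)),
      ∃ θij ∈ Θ i j, γ i j xi θij = xj ∧ fderiv ℝ (fun y => γ i j y θij) xi = α)
    (xhat : (k : Fin N) → EuclideanSpace ℝ (Fin (m k))) (hxhat : ∀ k, xhat k ∈ X k)
    -- the partial gradient of `J i` with respect to the opponents' variables is nonzero
    (hgrad : ∀ i : Fin N, ∃ j : Fin N, j ≠ i ∧
      fderiv ℝ (fun y : EuclideanSpace ℝ (Fin (m j)) =>
        J i (Function.update xhat j y)) (xhat j) ≠ 0) :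
    ∃ θ : (i j : Fin N) → EuclideanSpace ℝ (Fin d),
      (∀ i j : Fin N, i ≠ j → θ i j ∈ Θ i j) ∧
      ∀ i : Fin N,
        (∀ j : Fin N, j ≠ i → γ i j (xhat i) (θ i j) = xhat j) ∧
        fderiv ℝ (fun y : EuclideanSpace ℝ (Fin (m i)) =>
          J i (conjProfile γ θ i y)) (xhat i) = 0 := by
  classical
  set E : Fin N → Type := fun k => EuclideanSpace ℝ (Fin (m k)) with hE
  choose jstar hjne hDne using hgrad
  -- full derivative and partial derivatives
  set L : ∀ i, ((k : Fin N) → E k) →L[ℝ] ℝ := fun i => fderiv ℝ (J i) xhat with hL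
  set sgl : ∀ k, E k →L[ℝ] ((k : Fin N) → E k) :=
    fun k => ContinuousLinearMap.pi (Pi.single k (ContinuousLinearMap.id ℝ (E k))) with hsgl
  set D : ∀ i k, E k →L[ℝ] ℝ := fun i k => (L i).comp (sgl k) with hD
  have hsglval : ∀ (k) (w : E k), sgl k w = Pi.single k w := by
    intro k w
    funext k'
    rcases eq_or_ne k' k with h | h
    · subst h; simp [hsgl]
    · simp [hsgl, Pi.single_eq_of_ne h]
  have hpart : ∀ i k, fderiv ℝ (fun y : E k => J i (Function.update xhat k y)) (xhat k)
      = D i k := by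
    intro i k
    have h1 : HasFDerivAt (J i) (L i) (Function.update xhat k (xhat k)) := by
      rw [Function.update_eq_self]
      exact (((hJ i).differentiable one_ne_zero) xhat).hasFDerivAt
    have h2 : HasFDerivAt (Function.update xhat k) (sgl k) (xhat k) :=
      hasFDerivAt_update xhat (xhat k)
    exact (h1.comp (xhat k) h2).fderiv
  have hDjs : ∀ i, D i (jstar i) ≠ 0 := by
    intro i
    rw [← hpart i (jstar i)]
    exact hDne i
  have hv : ∀ i, ∃ v : E (jstar i), D i (jstar i) v = 1 := by
    intro i
    have hw : ∃ w, D i (jstar i) w ≠ 0 := by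
      by_contra h
      push_neg at h
      exact hDjs i (ContinuousLinearMap.ext fun w => by simpa using h w)
    obtain ⟨w, hw⟩ := hw
    refine ⟨(D i (jstar i) w)⁻¹ • w, ?_⟩
    rw [map_smul, smul_eq_mul, inv_mul_cancel₀ hw]
  choose v hv using hv
  -- the target Jacobians
  obtain ⟨A, hAjs, hAzero⟩ :
      ∃ A : ∀ i j, E i →L[ℝ] E j,
        (∀ i, A i (jstar i) = (-(D i i)).smulRight (v i)) ∧
        (∀ i j, j ≠ jstar i → A i j = 0) := by
    refine ⟨fun i j => if h : j = jstar i then h.symm ▸ ((-(D i i)).smulRight (v i)) else 0,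
      fun i => ?_, fun i j h => dif_neg h⟩
    exact dif_pos rfl
  -- choose the parameters
  have hθex : ∀ i j, ∃ θij : EuclideanSpace ℝ (Fin d), i ≠ j →
      θij ∈ Θ i j ∧ γ i j (xhat i) θij = xhat j ∧
      fderiv ℝ (fun y => γ i j y θij) (xhat i) = A i j := by
    intro i j
    by_cases h : i = j
    · exact ⟨0, fun hc => absurd h hc⟩
    · obtain ⟨θij, h1, h2, h3⟩ := hexpr i j h (xhat i) (hxhat i) (xhat j) (hxhat j) (A i j)
      exact ⟨θij, fun _ => ⟨h1, h2, h3⟩⟩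
  choose θ hθ using hθex
  refine ⟨θ, fun i j hij => (hθ i j hij).1, fun i => ?_⟩
  have hcons : ∀ j, j ≠ i → γ i j (xhat i) (θ i j) = xhat j :=
    fun j hj => (hθ i j (Ne.symm hj)).2.1
  refine ⟨hcons, ?_⟩
  -- the Jacobian of the conjectured profile
  obtain ⟨B, hBi, hBne⟩ :
      ∃ B : ∀ k, E i →L[ℝ] E k,
        B i = ContinuousLinearMap.id ℝ (E i) ∧ ∀ k, k ≠ i → B k = A i k := by
    refine ⟨fun k => if h : k = i then h.symm ▸ ContinuousLinearMap.id ℝ (E i) else A i k,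
      ?_, fun k h => dif_neg h⟩
    exact dif_pos rfl
  have hF : HasFDerivAt (conjProfile γ θ i) (ContinuousLinearMap.pi B) (xhat i) := by
    apply hasFDerivAt_pi''
    intro k
    rw [ContinuousLinearMap.proj_pi]
    by_cases hk : k = i
    · subst hk
      have hfun : (fun y : E k => conjProfile γ θ k y k) = fun y => y := by
        funext y; simp [conjProfile]
      rw [hfun, hBi]
      exact hasFDerivAt_id _
    · have hfun : (fun y : E i => conjProfile γ θ i y k) = fun y => γ i k y (θ i k) := by
        funext y; simp [conjProfile, Function.update_of_ne hk, hk]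
      rw [hfun, hBne k hk, ← (hθ i k (Ne.symm hk)).2.2]
      exact ((hγdiff i k (Ne.symm hk) (θ i k)) (xhat i)).hasFDerivAt
  have hFval : conjProfile γ θ i (xhat i) = xhat := by
    funext k
    by_cases hk : k = i
    · subst hk; simp [conjProfile]
    · simp [conjProfile, Function.update_of_ne hk, hk, hcons k hk]
  have hcomp : HasFDerivAt (fun y : E i => J i (conjProfile γ θ i y))
      ((L i).comp (ContinuousLinearMap.pi B)) (xhat i) := by
    have hJd : HasFDerivAt (J i) (L i) (conjProfile γ θ i (xhat i)) := by
      rw [hFval]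
      exact (((hJ i).differentiable one_ne_zero) xhat).hasFDerivAt
    exact hJd.comp (xhat i) hF
  rw [hcomp.fderiv]
  apply ContinuousLinearMap.ext
  intro u
  simp only [ContinuousLinearMap.comp_apply, ContinuousLinearMap.pi_apply,
    ContinuousLinearMap.zero_apply]
  have hsum : (ContinuousLinearMap.pi B) u = ∑ k, Pi.single k (B k u) :=
    (Finset.univ_sum_single (fun k => B k u)).symm
  rw [hsum, map_sum]
  have hterm : ∀ k, L i (Pi.single k (B k u)) = D i k (B k u) := by
    intro k
    rw [hD]
    simp only [ContinuousLinearMap.comp_apply]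
    rw [hsglval]
  simp only [hterm]
  have hzero : ∀ k, k ≠ i → k ≠ jstar i → D i k (B k u) = (0 : ℝ) := by
    intro k h1 h2
    rw [hBne k h1, hAzero i k h2, ContinuousLinearMap.zero_apply, map_zero]
  have hsub : (∑ k, D i k (B k u)) = ∑ k ∈ ({i, jstar i} : Finset (Fin N)), D i k (B k u) := by
    refine (Finset.sum_subset (Finset.subset_univ _) ?_).symm
    intro k _ hk
    simp only [Finset.mem_insert, Finset.mem_singleton, not_or] at hk
    exact hzero k hk.1 hk.2
  rw [hsub, Finset.sum_pair (Ne.symm (hjne i)), hBi, hBne (jstar i) (hjne i), hAjs i]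
  simp [hv i]
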